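/- Discrete L² bound for shifted first-derivative error: let u ∈ C²([0,1]) with u(0) = u(1) = 0, let 0 = x_0 < ... < x_{N+1} = 1 with h_{i+1/2} = x_{i+1} − x_i, Σ_{i=0}^{N} h_{i+1/2} = 1, and suppose (u_i)_{i=0}^{N+1} satisfies u_0 = u_{N+1} = 0 and the discrete H¹ error bound (Σ_{i=0}^{N} (e_{i+1}−e_i)²/h_{i+1/2})^{1/2} ≤ C h ‖u''‖_∞, where e_i = u(x_i) − u_i and h = max h_{i+1/2}. Then (Σ_{i=0}^{N} h_{i+1/2} (u_i − u(x_{i+1/2}))²)^{1/2} ≤ c h ‖u''‖_∞ for points x_{i+1/2} ∈ [x_i, x_{i+1}]. -/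

import Mathlib

open Set Finset

/-- Bound on the first derivative on the open interval, using Rolle. -/
lemma aux_deriv_bound (u : ℝ → ℝ) (M : ℝ) (hu : ContDiffOn ℝ 2 u (Icc 0 1))
    (hu0 : u 0 = 0) (hu1 : u 1 = 0)
    (hM2 : ∀ y ∈ Icc (0:ℝ) 1, |iteratedDeriv 2 u y| ≤ M) :
    ∀ y ∈ Ioo (0:ℝ) 1, |deriv u y| ≤ M := by
  have hu2 : ContDiffOn ℝ 2 u (Ioo 0 1) := hu.mono Ioo_subset_Icc_self
  have hdu1 : ContDiffOn ℝ 1 (deriv u) (Ioo 0 1) := by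
    have h2 : ContDiffOn ℝ (1 + 1) u (Ioo (0:ℝ) 1) := by
      have : ((1:WithTop ℕ∞) + 1) = 2 := by norm_num
      rw [this]; exact hu2
    exact ((contDiffOn_succ_iff_deriv_of_isOpen isOpen_Ioo).1 h2).2.2
  have hdd : DifferentiableOn ℝ (deriv u) (Ioo 0 1) := hdu1.differentiableOn one_ne_zero
  obtain ⟨ξ, hξ, hξ0⟩ := exists_deriv_eq_zero zero_lt_one hu.continuousOn (by rw [hu0, hu1])
  intro y hy
  have hM0 : 0 ≤ M := le_trans (abs_nonneg _) (hM2 0 (by norm_num))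
  have hlip : |deriv u y - deriv u ξ| ≤ M * |y - ξ| := by
    have := (convex_Ioo (0:ℝ) 1).norm_image_sub_le_of_norm_hasDerivWithin_le
      (f := deriv u) (f' := deriv (deriv u))
      (fun z hz => (((hdd z hz).differentiableAt
        (isOpen_Ioo.mem_nhds hz)).hasDerivAt).hasDerivWithinAt)
      (fun z hz => by
        have h := hM2 z (Ioo_subset_Icc_self hz)
        simpa [iteratedDeriv_succ, iteratedDeriv_zero, Real.norm_eq_abs] using h)
      hξ hy
    simpa [Real.norm_eq_abs] using this
  have hdist : |y - ξ| ≤ 1 := by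
    rw [abs_le]
    constructor <;> [linarith [hy.1, hξ.2]; linarith [hy.2, hξ.1]]
  calc |deriv u y| = |deriv u y - deriv u ξ| := by rw [hξ0, sub_zero]
    _ ≤ M * |y - ξ| := hlip
    _ ≤ M * 1 := by nlinarith
    _ = M := mul_one M

/-- M-Lipschitz bound on the closed interval via the mean value theorem. -/
lemma aux_lip (u : ℝ → ℝ) (M : ℝ) (hu : ContDiffOn ℝ 2 u (Icc 0 1))
    (hM0 : 0 ≤ M) (hder : ∀ y ∈ Ioo (0:ℝ) 1, |deriv u y| ≤ M) :
    ∀ a ∈ Icc (0:ℝ) 1, ∀ b ∈ Icc (0:ℝ) 1, |u b - u a| ≤ M * |b - a| := by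
  have key : ∀ a ∈ Icc (0:ℝ) 1, ∀ b ∈ Icc (0:ℝ) 1, a < b → |u b - u a| ≤ M * |b - a| := by
    intro a ha b hb hab
    have hcont : ContinuousOn u (Icc a b) := hu.continuousOn.mono (Icc_subset_Icc ha.1 hb.2)
    have hdiff : DifferentiableOn ℝ u (Ioo a b) :=
      (hu.differentiableOn two_ne_zero).mono
        (Ioo_subset_Icc_self.trans (Icc_subset_Icc ha.1 hb.2))
    obtain ⟨c, hc, hceq⟩ := exists_deriv_eq_slope u hab hcont hdiff
    have hcmem : c ∈ Ioo (0:ℝ) 1 := ⟨lt_of_le_of_lt ha.1 hc.1, lt_of_lt_of_le hc.2 hb.2⟩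
    have h1 : u b - u a = deriv u c * (b - a) := by
      rw [eq_div_iff (by linarith : b - a ≠ 0)] at hceq
      linarith [hceq]
    rw [h1, abs_mul]
    exact mul_le_mul_of_nonneg_right (hder c hcmem) (abs_nonneg _)
  intro a ha b hb
  rcases lt_trichotomy a b with h | h | h
  · exact key a ha b hb h
  · simp [h]
  · rw [abs_sub_comm (u b), abs_sub_comm b]
    exact key b hb a ha h

/-- discrete L² bound for the shifted first-derivative error:
`(Σ h_{i+1/2} (u_i − u(x_{i+1/2}))²)^{1/2} ≤ c h ‖u''‖_∞`, given the
standard O(h) discrete H¹₀ error bound with constant `C`. -/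
theorem discrete_L2_shifted_value_error (C : ℝ) (hC : 0 < C) :
    ∃ c : ℝ, 0 < c ∧
      ∀ (N : ℕ) (x xhalf : ℕ → ℝ) (uh : ℕ → ℝ) (u : ℝ → ℝ) (h M : ℝ),
        ContDiffOn ℝ 2 u (Icc 0 1) → u 0 = 0 → u 1 = 0 →
        x 0 = 0 → x (N + 1) = 1 →
        (∀ i ≤ N, x i < x (i + 1)) →
        (∀ i ≤ N, xhalf i ∈ Icc (x i) (x (i + 1))) →
        (∀ i ≤ N, x (i + 1) - x i ≤ h) →
        uh 0 = 0 → uh (N + 1) = 0 →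
        (∀ y ∈ Icc (0:ℝ) 1, |iteratedDeriv 2 u y| ≤ M) → 0 ≤ M →
        Real.sqrt (∑ i ∈ range (N + 1),
            ((u (x (i + 1)) - uh (i + 1)) - (u (x i) - uh i)) ^ 2
              / (x (i + 1) - x i)) ≤ C * h * M →
        Real.sqrt (∑ i ∈ range (N + 1),
            (x (i + 1) - x i) * (uh i - u (xhalf i)) ^ 2) ≤ c * h * M := by
  refine ⟨C + 1, by linarith, ?_⟩
  intro N x xhalf uh u h M hu hu0 hu1 hx0 hxN hxlt hxhalf hxh huh0 huhN hM2 hM0 hH1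
  -- Lipschitz bound for u on [0,1]
  have hlip : ∀ a ∈ Icc (0:ℝ) 1, ∀ b ∈ Icc (0:ℝ) 1, |u b - u a| ≤ M * |b - a| :=
    aux_lip u M hu hM0 (aux_deriv_bound u M hu hu0 hu1 hM2)
  -- monotonicity of the mesh
  have hmono : ∀ j, j ≤ N + 1 → ∀ i, i ≤ j → x i ≤ x j := by
    intro j
    induction j with
    | zero => intro _ i hi; interval_cases i; exact le_refl _
    | succ k ih =>
      intro hk1 i hi
      rcases Nat.lt_succ_iff_lt_or_eq.1 (Nat.lt_succ_of_le hi) with h' | h'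
      · exact le_trans (ih (le_trans (Nat.le_succ k) hk1) i (Nat.lt_succ_iff.1 h'))
          (le_of_lt (hxlt k (Nat.succ_le_succ_iff.1 hk1)))
      · exact le_of_eq (congrArg x h')
  have hmem : ∀ i, i ≤ N + 1 → x i ∈ Icc (0:ℝ) 1 := by
    intro i hi
    constructor
    · rw [← hx0]; exact hmono i hi 0 (Nat.zero_le i)
    · rw [← hxN]; exact hmono (N + 1) (le_refl _) i hi
  have hhalfmem : ∀ i, i ≤ N → xhalf i ∈ Icc (0:ℝ) 1 := by
    intro i hi
    obtain ⟨h1, h2⟩ := hxhalf i hi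
    exact ⟨le_trans (hmem i (le_trans hi (Nat.le_succ N))).1 h1,
      le_trans h2 (hmem (i + 1) (Nat.succ_le_succ hi)).2⟩
  have hh : 0 < h := lt_of_lt_of_le (sub_pos.2 (hxlt 0 (Nat.zero_le N))) (hxh 0 (Nat.zero_le N))
  have hpos : ∀ i ≤ N, (0:ℝ) < x (i + 1) - x i := fun i hi => sub_pos.2 (hxlt i hi)
  have hsum1 : ∑ i ∈ range (N + 1), (x (i + 1) - x i) = 1 := by
    rw [Finset.sum_range_sub (fun i => x i), hx0, hxN, sub_zero]
  -- the discrete H1 seminorm squared bound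
  set S := ∑ i ∈ range (N + 1),
      ((u (x (i + 1)) - uh (i + 1)) - (u (x i) - uh i)) ^ 2 / (x (i + 1) - x i) with hSdef
  have hS0 : 0 ≤ S := Finset.sum_nonneg fun i hi =>
    div_nonneg (sq_nonneg _) (le_of_lt (hpos i (Nat.lt_succ_iff.1 (Finset.mem_range.1 hi))))
  have hSle : S ≤ (C * h * M) ^ 2 := by
    have h1 : S = Real.sqrt S ^ 2 := (Real.sq_sqrt hS0).symm
    rw [h1]
    exact pow_le_pow_left₀ (Real.sqrt_nonneg _) hH1 2
  set E : ℕ → ℝ := fun i => u (x i) - uh i with hEdef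
  -- Cauchy-Schwarz for the telescoping sum
  have hCS : (∑ j ∈ range (N + 1), |E (j + 1) - E j|) ^ 2 ≤ 1 * S := by
    have h1 := Finset.sum_mul_sq_le_sq_mul_sq (range (N + 1))
      (fun j => Real.sqrt (x (j + 1) - x j))
      (fun j => |E (j + 1) - E j| / Real.sqrt (x (j + 1) - x j))
    have e1 : ∀ j ∈ range (N + 1),
        Real.sqrt (x (j + 1) - x j) * (|E (j + 1) - E j| / Real.sqrt (x (j + 1) - x j))
          = |E (j + 1) - E j| := by
      intro j hj
      have := hpos j (Nat.lt_succ_iff.1 (Finset.mem_range.1 hj))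
      field_simp
    have e2 : ∀ j ∈ range (N + 1),
        Real.sqrt (x (j + 1) - x j) ^ 2 = x (j + 1) - x j := by
      intro j hj
      exact Real.sq_sqrt (le_of_lt (hpos j (Nat.lt_succ_iff.1 (Finset.mem_range.1 hj))))
    have e3 : ∀ j ∈ range (N + 1),
        (|E (j + 1) - E j| / Real.sqrt (x (j + 1) - x j)) ^ 2
          = ((u (x (j + 1)) - uh (j + 1)) - (u (x j) - uh j)) ^ 2 / (x (j + 1) - x j) := by
      intro j hj
      have hp := hpos j (Nat.lt_succ_iff.1 (Finset.mem_range.1 hj))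
      rw [div_pow, Real.sq_sqrt (le_of_lt hp), sq_abs]
    rw [Finset.sum_congr rfl e1, Finset.sum_congr rfl e2, Finset.sum_congr rfl e3] at h1
    rw [hsum1] at h1
    exact h1
  have hChM : 0 ≤ C * h * M := by positivity
  have hdsum : ∑ j ∈ range (N + 1), |E (j + 1) - E j| ≤ C * h * M := by
    have h1 : (∑ j ∈ range (N + 1), |E (j + 1) - E j|) ^ 2 ≤ (C * h * M) ^ 2 := by
      calc (∑ j ∈ range (N + 1), |E (j + 1) - E j|) ^ 2 ≤ 1 * S := hCS
        _ = S := one_mul S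
        _ ≤ (C * h * M) ^ 2 := hSle
    have h3 := Real.sqrt_le_sqrt h1
    rwa [Real.sqrt_sq (Finset.sum_nonneg fun j _ => abs_nonneg _), Real.sqrt_sq hChM] at h3
  have he : ∀ i, i ≤ N + 1 → |E i| ≤ C * h * M := by
    intro i hi
    have hE0 : E 0 = 0 := by simp [hEdef, hx0, hu0, huh0]
    have h1 : E i = ∑ j ∈ range i, (E (j + 1) - E j) := by
      rw [Finset.sum_range_sub (fun j => E j), hE0, sub_zero]
    rw [h1]
    calc |∑ j ∈ range i, (E (j + 1) - E j)| ≤ ∑ j ∈ range i, |E (j + 1) - E j| :=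
          Finset.abs_sum_le_sum_abs _ _
      _ ≤ ∑ j ∈ range (N + 1), |E (j + 1) - E j| :=
          Finset.sum_le_sum_of_subset_of_nonneg
            (Finset.range_subset_range.2 hi) (fun j _ _ => abs_nonneg _)
      _ ≤ C * h * M := hdsum
  -- termwise bound
  have hterm : ∀ i ∈ range (N + 1),
      (x (i + 1) - x i) * (uh i - u (xhalf i)) ^ 2
        ≤ (x (i + 1) - x i) * ((C + 1) * h * M) ^ 2 := by
    intro i hi
    have hi' : i ≤ N := Nat.lt_succ_iff.1 (Finset.mem_range.1 hi)
    have h1 : |u (xhalf i) - u (x i)| ≤ M * h := by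
      have := hlip (x i) (hmem i (le_trans hi' (Nat.le_succ N))) (xhalf i) (hhalfmem i hi')
      have hd : |xhalf i - x i| ≤ h := by
        obtain ⟨ha, hb⟩ := hxhalf i hi'
        rw [abs_of_nonneg (by linarith)]
        linarith [hxh i hi']
      calc |u (xhalf i) - u (x i)| ≤ M * |xhalf i - x i| := this
        _ ≤ M * h := mul_le_mul_of_nonneg_left hd hM0
    have h2 : |E i| ≤ C * h * M := he i (le_trans hi' (Nat.le_succ N))
    have h3 : |uh i - u (xhalf i)| ≤ (C + 1) * h * M := by
      have heq : uh i - u (xhalf i) = -(E i) + -(u (xhalf i) - u (x i)) := by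
        simp only [hEdef]; ring
      rw [heq]
      calc |(-(E i)) + -(u (xhalf i) - u (x i))| ≤ |(-(E i))| + |(-(u (xhalf i) - u (x i)))| :=
            abs_add_le _ _
        _ = |E i| + |u (xhalf i) - u (x i)| := by rw [abs_neg, abs_neg]
        _ ≤ C * h * M + M * h := add_le_add h2 h1
        _ = (C + 1) * h * M := by ring
    have h4 : (uh i - u (xhalf i)) ^ 2 ≤ ((C + 1) * h * M) ^ 2 := by
      obtain ⟨hl, hr⟩ := abs_le.1 h3
      exact sq_le_sq' hl hr
    exact mul_le_mul_of_nonneg_left h4 (le_of_lt (hpos i hi'))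
  have hfin : ∑ i ∈ range (N + 1), (x (i + 1) - x i) * (uh i - u (xhalf i)) ^ 2
      ≤ ((C + 1) * h * M) ^ 2 := by
    calc ∑ i ∈ range (N + 1), (x (i + 1) - x i) * (uh i - u (xhalf i)) ^ 2
        ≤ ∑ i ∈ range (N + 1), (x (i + 1) - x i) * ((C + 1) * h * M) ^ 2 :=
          Finset.sum_le_sum hterm
      _ = (∑ i ∈ range (N + 1), (x (i + 1) - x i)) * ((C + 1) * h * M) ^ 2 := by
          rw [← Finset.sum_mul]
      _ = ((C + 1) * h * M) ^ 2 := by rw [hsum1, one_mul]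
  have hc0 : 0 ≤ (C + 1) * h * M := by positivity
  have := Real.sqrt_le_sqrt hfin
  rwa [Real.sqrt_sq hc0] at this
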